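/- arXiv:2006.13318 — 7 statements merged into one kernel-verified Lean document; each statement's English description precedes it below -/
import Mathlib

section
/- Let G be a finite simple graph on N vertices with adjacency matrix A and diagonal degree matrix D. Let Ã = A + I_N and D̃ = D + I_N, and define the augmented normalized Laplacian Δ̃ = I_N − D̃^{−1/2} Ã D̃^{−1/2}. Then every eigenvalue λ of Δ̃ satisfies 0 ≤ λ < 2. -/
open Matrix Finset

/-- The eigenvalues of the augmented normalized Laplacian
`Δ̃ = I - D̃^{-1/2} Ã D̃^{-1/2}` of a finite simple graph lie in `[0, 2)`. -/
theorem augNormLaplacian_eigenvalue_mem_Ico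
    (N : ℕ) (G : SimpleGraph (Fin N)) [DecidableRel G.Adj]
    (A D Atil Dtil DtilInvSqrt Δ : Matrix (Fin N) (Fin N) ℝ)
    (hA : A = G.adjMatrix ℝ)
    (hD : D = Matrix.diagonal (fun i => (G.degree i : ℝ)))
    (hAtil : Atil = A + 1)
    (hDtil : Dtil = D + 1)
    (hDtilInvSqrt : DtilInvSqrt = Matrix.diagonal
      (fun i => (Real.sqrt ((G.degree i : ℝ) + 1))⁻¹))
    (hΔ : Δ = 1 - DtilInvSqrt * Atil * DtilInvSqrt)
    (μ : ℝ) (v : Fin N → ℝ) (hv : v ≠ 0) (heig : Δ.mulVec v = μ • v) :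
    0 ≤ μ ∧ μ < 2 := by
  classical
  set d : Fin N → ℝ := fun i => (G.degree i : ℝ) with hd
  have hd0 : ∀ i, 0 ≤ d i := fun i => by positivity
  set s : Fin N → ℝ := fun i => Real.sqrt (d i + 1) with hs
  have hspos : ∀ i, 0 < s i := fun i =>
    Real.sqrt_pos.2 (by have := hd0 i; linarith)
  have hssq : ∀ i, s i ^ 2 = d i + 1 := fun i =>
    Real.sq_sqrt (by have := hd0 i; linarith)
  set w : Fin N → ℝ := fun i => (s i)⁻¹ * v i with hw
  have hvw : ∀ i, v i = s i * w i := fun i => by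
    have hne := (hspos i).ne'
    simp only [hw]
    field_simp
  -- diagonal action
  have hPv : DtilInvSqrt.mulVec v = w := by
    funext i
    simp [hDtilInvSqrt, Matrix.mulVec_diagonal, hw, hs, hd]
  have hPdot : ∀ y : Fin N → ℝ, v ⬝ᵥ DtilInvSqrt.mulVec y = w ⬝ᵥ y := by
    intro y
    simp only [hDtilInvSqrt, dotProduct, Matrix.mulVec_diagonal]
    refine Finset.sum_congr rfl fun i _ => ?_
    simp only [hw, hs, hd]
    ring
  -- eigen relation in quadratic form
  have key : v ⬝ᵥ Δ.mulVec v = μ * (v ⬝ᵥ v) := by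
    rw [heig, dotProduct_smul, smul_eq_mul]
  set a : Fin N → Fin N → ℝ := fun i j => if G.Adj i j then 1 else 0 with ha
  have hasymm : ∀ i j, a i j = a j i := fun i j => by
    simp only [ha]
    congr 1
    exact propext (G.adj_comm i j)
  have hanon : ∀ i j, 0 ≤ a i j := fun i j => by
    simp only [ha]; split <;> norm_num
  have hdeg : ∀ i, ∑ j, a i j = d i := by
    intro i
    simp only [ha, hd, Finset.sum_boole, SimpleGraph.degree]
    rw [SimpleGraph.neighborFinset_eq_filter]
  have hAw : w ⬝ᵥ A.mulVec w = ∑ i, ∑ j, a i j * w i * w j := by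
    subst hA
    simp only [dotProduct, Matrix.mulVec, dotProduct, SimpleGraph.adjMatrix_apply,
      Finset.mul_sum]
    refine Finset.sum_congr rfl fun i _ => Finset.sum_congr rfl fun j _ => ?_
    simp only [ha]; ring
  set Qd : ℝ := ∑ i, d i * w i ^ 2 with hQd
  set Qa : ℝ := ∑ i, ∑ j, a i j * w i * w j with hQa
  set Sw : ℝ := ∑ i, w i ^ 2 with hSw
  have hvv_eq : v ⬝ᵥ v = Qd + Sw := by
    rw [hQd, hSw, ← Finset.sum_add_distrib]
    simp only [dotProduct]
    refine Finset.sum_congr rfl fun i _ => ?_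
    rw [hvw i]
    linear_combination (w i ^ 2) * hssq i
  -- main quadratic form computation
  have hQ : v ⬝ᵥ Δ.mulVec v = Qd - Qa := by
    rw [hΔ, Matrix.sub_mulVec, Matrix.one_mulVec, dotProduct_sub,
      ← Matrix.mulVec_mulVec, ← Matrix.mulVec_mulVec, hPv, hPdot,
      hAtil, Matrix.add_mulVec, Matrix.one_mulVec, dotProduct_add, hAw, hvv_eq]
    have : w ⬝ᵥ w = Sw := by
      simp only [hSw, dotProduct, sq]
    rw [this]
    ring
  -- sums of nonnegative squares
  have e2 : ∑ i, ∑ j, a i j * w i ^ 2 = Qd := by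
    refine Finset.sum_congr rfl fun i _ => ?_
    rw [← Finset.sum_mul, hdeg i]
  have e3 : ∑ i, ∑ j, a i j * w j ^ 2 = Qd := by
    rw [Finset.sum_comm]
    refine Finset.sum_congr rfl fun j _ => ?_
    calc ∑ i, a i j * w j ^ 2 = ∑ i, a j i * w j ^ 2 :=
          Finset.sum_congr rfl fun i _ => by rw [hasymm]
      _ = d j * w j ^ 2 := by rw [← Finset.sum_mul, hdeg j]
  have L1 : ∑ i, ∑ j, a i j * (w i - w j) ^ 2 = 2 * (Qd - Qa) := by
    have expand : ∀ i : Fin N, ∑ j, a i j * (w i - w j) ^ 2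
        = (∑ j, a i j * w i ^ 2) + (∑ j, a i j * w j ^ 2)
          - 2 * ∑ j, a i j * w i * w j := by
      intro i
      rw [← Finset.sum_add_distrib, Finset.mul_sum, ← Finset.sum_sub_distrib]
      exact Finset.sum_congr rfl fun j _ => by ring
    calc ∑ i, ∑ j, a i j * (w i - w j) ^ 2
        = (∑ i, ∑ j, a i j * w i ^ 2) + (∑ i, ∑ j, a i j * w j ^ 2)
          - 2 * ∑ i, ∑ j, a i j * w i * w j := by
          rw [← Finset.sum_add_distrib, Finset.mul_sum, ← Finset.sum_sub_distrib]
          exact Finset.sum_congr rfl fun i _ => expand i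
      _ = 2 * (Qd - Qa) := by rw [e2, e3, hQa]; ring
  have L2 : ∑ i, ∑ j, a i j * (w i + w j) ^ 2 = 2 * (Qd + Qa) := by
    have expand : ∀ i : Fin N, ∑ j, a i j * (w i + w j) ^ 2
        = (∑ j, a i j * w i ^ 2) + (∑ j, a i j * w j ^ 2)
          + 2 * ∑ j, a i j * w i * w j := by
      intro i
      rw [Finset.mul_sum, ← Finset.sum_add_distrib, ← Finset.sum_add_distrib]
      exact Finset.sum_congr rfl fun j _ => by ring
    calc ∑ i, ∑ j, a i j * (w i + w j) ^ 2
        = (∑ i, ∑ j, a i j * w i ^ 2) + (∑ i, ∑ j, a i j * w j ^ 2)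
          + 2 * ∑ i, ∑ j, a i j * w i * w j := by
          rw [Finset.mul_sum, ← Finset.sum_add_distrib, ← Finset.sum_add_distrib]
          exact Finset.sum_congr rfl fun i _ => expand i
      _ = 2 * (Qd + Qa) := by rw [e2, e3, hQa]; ring
  have N1 : (0:ℝ) ≤ ∑ i, ∑ j, a i j * (w i - w j) ^ 2 :=
    Finset.sum_nonneg fun i _ => Finset.sum_nonneg fun j _ =>
      mul_nonneg (hanon i j) (sq_nonneg _)
  have N2 : (0:ℝ) ≤ ∑ i, ∑ j, a i j * (w i + w j) ^ 2 :=
    Finset.sum_nonneg fun i _ => Finset.sum_nonneg fun j _ =>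
      mul_nonneg (hanon i j) (sq_nonneg _)
  -- positivity of Sw
  have hw0 : w ≠ 0 := by
    intro h
    apply hv
    funext i
    rw [hvw i, h]
    simp
  obtain ⟨i0, hi0⟩ : ∃ i, w i ≠ 0 := by
    by_contra h
    push_neg at h
    exact hw0 (funext h)
  have hSwpos : 0 < Sw := by
    rw [hSw]
    refine Finset.sum_pos' (fun i _ => sq_nonneg _) ⟨i0, Finset.mem_univ _, ?_⟩
    positivity
  have hQdnn : 0 ≤ Qd := Finset.sum_nonneg fun i _ =>
    mul_nonneg (hd0 i) (sq_nonneg _)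
  have hmain : μ * (Qd + Sw) = Qd - Qa := by
    rw [← hvv_eq, ← key, hQ]
  constructor
  · nlinarith [L1, N1]
  · nlinarith [L2, N2]
end

section
/- Let G be a finite simple graph on N vertices with adjacency matrix A and diagonal degree matrix D. Let Ã = A + I_N and D̃ = D + I_N, and define P = D̃^{−1/2} Ã D̃^{−1/2}. Then every eigenvalue μ of P satisfies −1 < μ ≤ 1. -/
open Finset Matrix

/-- Signless Laplacian quadratic form is nonneg. -/
lemma signless_nonneg {N : ℕ} (G : SimpleGraph (Fin N)) [DecidableRel G.Adj]
    (x : Fin N → ℝ) :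
    0 ≤ x ⬝ᵥ ((G.degMatrix ℝ + G.adjMatrix ℝ) *ᵥ x) := by
  have h : x ⬝ᵥ ((G.degMatrix ℝ + G.adjMatrix ℝ) *ᵥ x) =
      (∑ i : Fin N, ∑ j : Fin N, if G.Adj i j then (x i + x j)^2 else 0) / 2 := by
    simp_rw [add_mulVec, dotProduct_add, SimpleGraph.dotProduct_mulVec_degMatrix,
      SimpleGraph.dotProduct_mulVec_adjMatrix, ← sum_add_distrib,
      SimpleGraph.degree_eq_sum_if_adj, sum_mul, ite_mul, one_mul, zero_mul,
      ← sum_add_distrib, ite_add_ite, add_zero]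
    rw [← add_self_div_two (∑ x_1 : Fin N, ∑ x_2 : Fin N, _)]
    conv_lhs => enter [1,2,2,i,2,j]; rw [if_congr (SimpleGraph.adj_comm G i j) rfl rfl]
    conv_lhs => enter [1,2]; rw [Finset.sum_comm]
    simp_rw [← sum_add_distrib, ite_add_ite]
    congr 2 with i
    congr 2 with j
    ring_nf
  rw [h]
  positivity

/-- The eigenvalues of the propagation matrix `P = D̃^{-1/2} Ã D̃^{-1/2}`
of a finite simple graph lie in `(-1, 1]`. -/
theorem propagationMatrix_eigenvalue_mem_Ioc
    (N : ℕ) (G : SimpleGraph (Fin N)) [DecidableRel G.Adj]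
    (A D Atil Dtil DtilInvSqrt P : Matrix (Fin N) (Fin N) ℝ)
    (hA : A = G.adjMatrix ℝ)
    (hD : D = Matrix.diagonal (fun i => (G.degree i : ℝ)))
    (hAtil : Atil = A + 1)
    (hDtil : Dtil = D + 1)
    (hDtilInvSqrt : DtilInvSqrt = Matrix.diagonal
      (fun i => (Real.sqrt ((G.degree i : ℝ) + 1))⁻¹))
    (hP : P = DtilInvSqrt * Atil * DtilInvSqrt)
    (μ : ℝ) (v : Fin N → ℝ) (hv : v ≠ 0) (heig : P.mulVec v = μ • v) :
    -1 < μ ∧ μ ≤ 1 := by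
  -- notation
  set q : Fin N → ℝ := fun i => (Real.sqrt ((G.degree i : ℝ) + 1))⁻¹ with hq
  have hdpos : ∀ i, (0:ℝ) < (G.degree i : ℝ) + 1 := fun i => by positivity
  have hqpos : ∀ i, 0 < q i := fun i => by
    simp only [hq]; exact inv_pos.mpr (Real.sqrt_pos.mpr (hdpos i))
  set w : Fin N → ℝ := fun i => q i * v i with hw
  -- v ⬝ᵥ P v = w ⬝ᵥ Atil w
  have hdiag : ∀ u : Fin N → ℝ, v ⬝ᵥ ((Matrix.diagonal q) *ᵥ u) = w ⬝ᵥ u := by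
    intro u
    simp only [dotProduct, mulVec_diagonal, hw]
    exact Finset.sum_congr rfl fun i _ => by ring
  have hwv : w = (Matrix.diagonal q) *ᵥ v := by
    funext i; simp [mulVec_diagonal, hw]
  have key : v ⬝ᵥ (P *ᵥ v) = w ⬝ᵥ (Atil *ᵥ w) := by
    rw [hP, hDtilInvSqrt, ← Matrix.mulVec_mulVec, ← Matrix.mulVec_mulVec, hdiag, ← hwv]
  -- v ⬝ᵥ v = w ⬝ᵥ Dtil w
  have hDtil' : Dtil = Matrix.diagonal (fun i => (G.degree i : ℝ) + 1) := by
    rw [hDtil, hD, ← Matrix.diagonal_one, Matrix.diagonal_add]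
  have hvvw : v ⬝ᵥ v = w ⬝ᵥ (Dtil *ᵥ w) := by
    rw [hDtil']
    simp only [dotProduct, mulVec_diagonal, hw, hq]
    refine Finset.sum_congr rfl fun i _ => ?_
    have hs : Real.sqrt ((G.degree i : ℝ) + 1) ^ 2 = (G.degree i : ℝ) + 1 :=
      Real.sq_sqrt (hdpos i).le
    have hsne : Real.sqrt ((G.degree i : ℝ) + 1) ≠ 0 :=
      (Real.sqrt_pos.mpr (hdpos i)).ne'
    field_simp
    nlinarith [hs]
  -- w ≠ 0
  have hwne : w ≠ 0 := by
    intro h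
    apply hv
    funext i
    have := congrFun h i
    simp only [hw, Pi.zero_apply] at this ⊢
    exact (mul_eq_zero.mp this).resolve_left (hqpos i).ne'
  have hww : 0 < w ⬝ᵥ w := by
    have h := Matrix.dotProduct_self_star_pos_iff.mpr hwne
    rwa [star_trivial] at h
  -- upper bound: w⬝Atil w ≤ w⬝Dtil w
  have hupper : w ⬝ᵥ (Atil *ᵥ w) ≤ w ⬝ᵥ (Dtil *ᵥ w) := by
    have hlap : Dtil - Atil = G.lapMatrix ℝ := by
      rw [hDtil, hAtil, hD, hA, SimpleGraph.lapMatrix, SimpleGraph.degMatrix]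
      abel
    have := (SimpleGraph.posSemidef_lapMatrix ℝ G).dotProduct_mulVec_nonneg w
    rw [star_trivial, ← hlap, sub_mulVec, dotProduct_sub] at this
    have : (0:ℝ) ≤ w ⬝ᵥ (Dtil *ᵥ w) - w ⬝ᵥ (Atil *ᵥ w) := by exact_mod_cast this
    linarith
  -- lower bound
  have hlower : -(w ⬝ᵥ (Dtil *ᵥ w)) < w ⬝ᵥ (Atil *ᵥ w) := by
    have hsum : w ⬝ᵥ (Atil *ᵥ w) + w ⬝ᵥ (Dtil *ᵥ w)
        = w ⬝ᵥ ((G.degMatrix ℝ + G.adjMatrix ℝ) *ᵥ w) + 2 * (w ⬝ᵥ w) := by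
      rw [hAtil, hDtil, hA, hD]
      have : G.degMatrix ℝ = Matrix.diagonal (fun i => (G.degree i : ℝ)) := rfl
      rw [← this]
      simp only [add_mulVec, dotProduct_add, Matrix.one_mulVec]
      ring
    nlinarith [signless_nonneg G w]
  -- conclude
  have hvv : 0 < v ⬝ᵥ v := by rw [hvvw]; nlinarith
  have heq : μ * (v ⬝ᵥ v) = w ⬝ᵥ (Atil *ᵥ w) := by
    rw [← key, heig, dotProduct_smul, smul_eq_mul]
  constructor
  · have : -(v ⬝ᵥ v) < μ * (v ⬝ᵥ v) := by rw [heq, hvvw]; exact hlower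
    nlinarith
  · have : μ * (v ⬝ᵥ v) ≤ v ⬝ᵥ v := by rw [heq, hvvw]; exact hupper
    nlinarith
end

section
/- Let Δ̃ ∈ ℝ^{N×N} be real symmetric and positive semidefinite. Then for every X ∈ ℝ^{N×C} and every weight matrix W ∈ ℝ^{C×C'}, one has E(XW) ≤ ‖W^T‖₂² · E(X), where ‖W^T‖₂ denotes the spectral norm (largest singular value) of W^T and E(Y) = tr(Y^T Δ̃ Y). -/
open Matrix

/-- The spectral norm (largest singular value) of a real matrix, i.e. the
operator norm of the induced linear map between Euclidean spaces. -/
noncomputable def matrixSpectralNorm {m n : ℕ} (M : Matrix (Fin m) (Fin n) ℝ) : ℝ :=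
  ‖LinearMap.toContinuousLinearMap (Matrix.toEuclideanLin M)‖

lemma trace_conjT_mul_self_nonneg {m n : ℕ} (M : Matrix (Fin m) (Fin n) ℝ) :
    0 ≤ (Mᴴ * M).trace := by
  rw [Matrix.trace]
  apply Finset.sum_nonneg
  intro i _
  rw [Matrix.diag_apply, Matrix.mul_apply]
  apply Finset.sum_nonneg
  intro j _
  simp [Matrix.conjTranspose_apply, mul_self_nonneg]

open scoped MatrixOrder in
lemma trace_mul_psd_nonneg {n : ℕ} {A B : Matrix (Fin n) (Fin n) ℝ}
    (hA : A.PosSemidef) (hB : B.PosSemidef) : 0 ≤ (A * B).trace := by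
  obtain ⟨P, hP⟩ := CStarAlgebra.nonneg_iff_eq_star_mul_self.mp hA.nonneg
  rw [star_eq_conjTranspose] at hP; subst hP
  obtain ⟨Q, hQ⟩ := CStarAlgebra.nonneg_iff_eq_star_mul_self.mp hB.nonneg
  rw [star_eq_conjTranspose] at hQ; subst hQ
  have h1 : Pᴴ * P * (Qᴴ * Q) = Pᴴ * (P * Qᴴ * Q) := by
    simp only [Matrix.mul_assoc]
  rw [h1, Matrix.trace_mul_comm]
  have h2 : P * Qᴴ * Q * Pᴴ = (Q * Pᴴ)ᴴ * (Q * Pᴴ) := by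
    simp only [Matrix.conjTranspose_mul, Matrix.conjTranspose_conjTranspose,
      Matrix.mul_assoc]
  rw [h2]
  exact trace_conjT_mul_self_nonneg _

lemma mulVec_norm_sq_le {m n : ℕ} (M : Matrix (Fin m) (Fin n) ℝ) (x : Fin n → ℝ) :
    (M *ᵥ x) ⬝ᵥ (M *ᵥ x) ≤ (matrixSpectralNorm M) ^ 2 * (x ⬝ᵥ x) := by
  set f := LinearMap.toContinuousLinearMap (Matrix.toEuclideanLin M)
  set v : EuclideanSpace ℝ (Fin n) := (WithLp.equiv 2 (Fin n → ℝ)).symm x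
  have hfv : f v = (WithLp.equiv 2 (Fin m → ℝ)).symm (M *ᵥ x) := rfl
  have h1 : (M *ᵥ x) ⬝ᵥ (M *ᵥ x) = ‖f v‖ ^ 2 := by
    rw [hfv, EuclideanSpace.norm_eq, Real.sq_sqrt (Finset.sum_nonneg fun i _ => sq_nonneg _)]
    simp [dotProduct, sq]
  have h2 : (x ⬝ᵥ x) = ‖v‖ ^ 2 := by
    rw [EuclideanSpace.norm_eq, Real.sq_sqrt (Finset.sum_nonneg fun i _ => sq_nonneg _)]
    simp [dotProduct, sq, v]
  rw [h1, h2]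
  calc ‖f v‖ ^ 2 ≤ (‖f‖ * ‖v‖) ^ 2 := by
        apply pow_le_pow_left₀ (norm_nonneg _) (f.le_opNorm v)
    _ = matrixSpectralNorm M ^ 2 * ‖v‖ ^ 2 := by rw [mul_pow]; rfl

/-- If `Δ̃` is symmetric PSD then `E(XW) ≤ ‖Wᵀ‖₂² E(X)` for every
`X ∈ ℝ^{N×C}` and `W ∈ ℝ^{C×C'}`, where `E(Y) = tr(Yᵀ Δ̃ Y)` and `‖·‖₂`
is the spectral norm. -/
theorem energy_mul_weight_le
    (N C C' : ℕ) (Δ : Matrix (Fin N) (Fin N) ℝ) (hpsd : Δ.PosSemidef)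
    (X : Matrix (Fin N) (Fin C) ℝ) (W : Matrix (Fin C) (Fin C') ℝ) :
    Matrix.trace ((X * W)ᵀ * Δ * (X * W)) ≤
      (matrixSpectralNorm Wᵀ) ^ 2 * Matrix.trace (Xᵀ * Δ * X) := by
  set c := matrixSpectralNorm Wᵀ
  have hA : (Xᵀ * Δ * X).PosSemidef := by
    have := hpsd.conjTranspose_mul_mul_same X
    simpa [Matrix.conjTranspose_eq_transpose_of_trivial] using this
  have hc : 0 ≤ c ^ 2 := sq_nonneg _
  -- c^2 • 1 - W * Wᵀ is PSD
  have hP : ((c ^ 2) • (1 : Matrix (Fin C) (Fin C) ℝ) - W * Wᵀ).PosSemidef := by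
    rw [posSemidef_iff_dotProduct_mulVec]
    constructor
    · have hW : (W * Wᵀ).IsHermitian := by
        have := Matrix.isHermitian_mul_conjTranspose_self W
        simpa [Matrix.conjTranspose_eq_transpose_of_trivial] using this
      simp only [Matrix.IsHermitian, Matrix.conjTranspose_sub, Matrix.conjTranspose_smul,
        Matrix.conjTranspose_one, hW.eq, star_trivial]
    · intro x
      have key : (Wᵀ *ᵥ x) ⬝ᵥ (Wᵀ *ᵥ x) ≤ c ^ 2 * (x ⬝ᵥ x) := mulVec_norm_sq_le Wᵀ x
      have h1 : x ⬝ᵥ ((W * Wᵀ) *ᵥ x) = (Wᵀ *ᵥ x) ⬝ᵥ (Wᵀ *ᵥ x) := by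
        rw [← Matrix.mulVec_mulVec, Matrix.dotProduct_mulVec, Matrix.mulVec_transpose]
      simp only [star_trivial, Matrix.sub_mulVec, dotProduct_sub,
        Matrix.smul_mulVec, Matrix.one_mulVec, dotProduct_smul,
        smul_eq_mul, h1, sub_nonneg]
      exact key
  have key := trace_mul_psd_nonneg hA hP
  have expand : (Xᵀ * Δ * X) * ((c ^ 2) • (1 : Matrix (Fin C) (Fin C) ℝ) - W * Wᵀ)
      = (c ^ 2) • (Xᵀ * Δ * X) - (Xᵀ * Δ * X) * (W * Wᵀ) := by
    rw [Matrix.mul_sub, Matrix.mul_smul, Matrix.mul_one]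
  rw [expand, Matrix.trace_sub, Matrix.trace_smul, smul_eq_mul, sub_nonneg] at key
  have heq : Matrix.trace ((X * W)ᵀ * Δ * (X * W))
      = Matrix.trace ((Xᵀ * Δ * X) * (W * Wᵀ)) := by
    rw [Matrix.transpose_mul]
    calc Matrix.trace (Wᵀ * Xᵀ * Δ * (X * W))
        = Matrix.trace (Wᵀ * (Xᵀ * Δ * X * W)) := by simp only [Matrix.mul_assoc]
      _ = Matrix.trace (Xᵀ * Δ * X * W * Wᵀ) := Matrix.trace_mul_comm _ _
      _ = Matrix.trace ((Xᵀ * Δ * X) * (W * Wᵀ)) := by simp only [Matrix.mul_assoc]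
  rw [heq]
  exact key
end

section
/- Let G be a finite graph on N vertices with symmetric nonnegative edge weights w_{ij}, degrees d_i = Σ_j w_{ij}, and Dirichlet energy E(X) = (1/2) Σ_{i,j} w_{ij} ‖ x_i/√(1+d_i) − x_j/√(1+d_j) ‖₂² for X ∈ ℝ^{N×C} with rows x_i. Let ReLU be applied entrywise, ReLU(x) = max(x, 0). Then E(ReLU(X)) ≤ E(X). -/
/-- Entrywise ReLU does not increase the Dirichlet energy
`E(X) = (1/2) ∑_{i,j} w_{ij} ‖x_i/√(1+d_i) - x_j/√(1+d_j)‖₂²`. -/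
theorem dirichletEnergy_relu_le
    (N C : ℕ) (w : Matrix (Fin N) (Fin N) ℝ)
    (hsymm : ∀ i j, w i j = w j i)
    (hnonneg : ∀ i j, 0 ≤ w i j)
    (d : Fin N → ℝ) (hd : ∀ i, d i = ∑ j, w i j)
    (X : Matrix (Fin N) (Fin C) ℝ) :
    (1 / 2) * ∑ i, ∑ j, w i j *
        ∑ k, (max (X i k) 0 / Real.sqrt (1 + d i)
              - max (X j k) 0 / Real.sqrt (1 + d j)) ^ 2 ≤
    (1 / 2) * ∑ i, ∑ j, w i j *
        ∑ k, (X i k / Real.sqrt (1 + d i) - X j k / Real.sqrt (1 + d j)) ^ 2 := by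
  have hs : ∀ i, 0 < Real.sqrt (1 + d i) := by
    intro i
    apply Real.sqrt_pos.2
    have : 0 ≤ d i := by
      rw [hd i]; exact Finset.sum_nonneg fun j _ => hnonneg i j
    linarith
  gcongr (1/2) * ∑ i, ∑ j, w i j * ?_ with i _ j _
  · exact hnonneg i j
  apply Finset.sum_le_sum
  intro k _
  have h1 : max (X i k) 0 / Real.sqrt (1 + d i) = max (X i k / Real.sqrt (1 + d i)) 0 := by
    rw [← max_div_div_right (hs i).le, zero_div]
  have h2 : max (X j k) 0 / Real.sqrt (1 + d j) = max (X j k / Real.sqrt (1 + d j)) 0 := by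
    rw [← max_div_div_right (hs j).le, zero_div]
  rw [h1, h2]
  set a := X i k / Real.sqrt (1 + d i)
  set b := X j k / Real.sqrt (1 + d j)
  have habs : |max a 0 - max b 0| ≤ |a - b| := abs_max_sub_max_le_abs a b 0
  calc (max a 0 - max b 0) ^ 2 = |max a 0 - max b 0| ^ 2 := (sq_abs _).symm
    _ ≤ |a - b| ^ 2 := by apply pow_le_pow_left₀ (abs_nonneg _) habs
    _ = (a - b) ^ 2 := sq_abs _
end

section
/- Let G be a finite graph on N vertices with symmetric nonnegative edge weights w_{ij}, degrees d_i = Σ_j w_{ij}, and Dirichlet energy E(X) = (1/2) Σ_{i,j} w_{ij} ‖ x_i/√(1+d_i) − x_j/√(1+d_j) ‖₂² for X ∈ ℝ^{N×C} with rows x_i. Let α ∈ [0, 1] and let LeakyReLU_α be applied entrywise, where LeakyReLU_α(x) = x for x ≥ 0 and LeakyReLU_α(x) = αx for x < 0. Then E(LeakyReLU_α(X)) ≤ E(X). -/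
/-- The Leaky-ReLU activation with negative slope `α`. -/
noncomputable def leakyReLU (α : ℝ) (x : ℝ) : ℝ := if 0 ≤ x then x else α * x

lemma leakyReLU_div (α x s : ℝ) (hs : 0 < s) :
    leakyReLU α x / s = leakyReLU α (x / s) := by
  unfold leakyReLU
  rcases le_or_gt 0 x with h | h
  · rw [if_pos h, if_pos (div_nonneg h hs.le)]
  · rw [if_neg (not_le.2 h), if_neg (not_le.2 (div_neg_of_neg_of_pos h hs)),
      mul_div_assoc]

lemma leakyReLU_sq_sub_le (α : ℝ) (hα0 : 0 ≤ α) (hα1 : α ≤ 1) (a b : ℝ) :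
    (leakyReLU α a - leakyReLU α b) ^ 2 ≤ (a - b) ^ 2 := by
  unfold leakyReLU
  split_ifs with ha hb hb
  · exact le_rfl
  · push_neg at hb
    nlinarith [mul_nonneg ha (neg_nonneg.2 hb.le),
      mul_nonneg (mul_nonneg hα0 (sub_nonneg.2 hα1)) (sq_nonneg b),
      mul_nonneg (sub_nonneg.2 hα1) (sq_nonneg b)]
  · push_neg at ha
    nlinarith [mul_nonneg hb (neg_nonneg.2 ha.le),
      mul_nonneg (mul_nonneg hα0 (sub_nonneg.2 hα1)) (sq_nonneg a),
      mul_nonneg (sub_nonneg.2 hα1) (sq_nonneg a)]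
  · push_neg at ha hb
    nlinarith [mul_nonneg (mul_nonneg hα0 (sub_nonneg.2 hα1)) (sq_nonneg (a - b)),
      mul_nonneg (sub_nonneg.2 hα1) (sq_nonneg (a - b))]

/-- Entrywise Leaky-ReLU with slope `α ∈ [0,1]` does not increase the Dirichlet
energy `E(X) = (1/2) ∑_{i,j} w_{ij} ‖x_i/√(1+d_i) - x_j/√(1+d_j)‖₂²`. -/
theorem dirichletEnergy_leakyReLU_le
    (N C : ℕ) (w : Matrix (Fin N) (Fin N) ℝ)
    (hsymm : ∀ i j, w i j = w j i)
    (hnonneg : ∀ i j, 0 ≤ w i j)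
    (d : Fin N → ℝ) (hd : ∀ i, d i = ∑ j, w i j)
    (α : ℝ) (hα0 : 0 ≤ α) (hα1 : α ≤ 1)
    (X : Matrix (Fin N) (Fin C) ℝ) :
    (1 / 2) * ∑ i, ∑ j, w i j *
        ∑ k, (leakyReLU α (X i k) / Real.sqrt (1 + d i)
              - leakyReLU α (X j k) / Real.sqrt (1 + d j)) ^ 2 ≤
    (1 / 2) * ∑ i, ∑ j, w i j *
        ∑ k, (X i k / Real.sqrt (1 + d i) - X j k / Real.sqrt (1 + d j)) ^ 2 := by
  have hdpos : ∀ i, 0 < Real.sqrt (1 + d i) := by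
    intro i
    apply Real.sqrt_pos.2
    have : 0 ≤ d i := by
      rw [hd i]; exact Finset.sum_nonneg fun j _ => hnonneg i j
    linarith
  apply mul_le_mul_of_nonneg_left _ (by norm_num)
  apply Finset.sum_le_sum; intro i _
  apply Finset.sum_le_sum; intro j _
  apply mul_le_mul_of_nonneg_left _ (hnonneg i j)
  apply Finset.sum_le_sum; intro k _
  rw [leakyReLU_div α (X i k) _ (hdpos i), leakyReLU_div α (X j k) _ (hdpos j)]
  exact leakyReLU_sq_sub_le α hα0 hα1 _ _
end

section
/- Let σ : ℝ → ℝ be 1-Lipschitz and positively homogeneous (σ(cx) = cσ(x) for all c > 0, x ∈ ℝ). Let G be a finite graph on N vertices with symmetric nonnegative edge weights w_{ij} and degrees d_i = Σ_j w_{ij}, with Dirichlet energy E(X) = (1/2) Σ_{i,j} w_{ij} ‖ x_i/√(1+d_i) − x_j/√(1+d_j) ‖₂² for X ∈ ℝ^{N×C} with rows x_i. Then, applying σ entrywise, E(σ(X)) ≤ E(X). -/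
/-- Any 1-Lipschitz, positively homogeneous activation `σ` applied entrywise
does not increase the Dirichlet energy
`E(X) = (1/2) ∑_{i,j} w_{ij} ‖x_i/√(1+d_i) - x_j/√(1+d_j)‖₂²`. -/
theorem dirichletEnergy_activation_le
    (σ : ℝ → ℝ)
    (hlip : ∀ x y : ℝ, |σ x - σ y| ≤ |x - y|)
    (hhom : ∀ (c x : ℝ), 0 < c → σ (c * x) = c * σ x)
    (N C : ℕ) (w : Matrix (Fin N) (Fin N) ℝ)
    (hsymm : ∀ i j, w i j = w j i)
    (hnonneg : ∀ i j, 0 ≤ w i j)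
    (d : Fin N → ℝ) (hd : ∀ i, d i = ∑ j, w i j)
    (X : Matrix (Fin N) (Fin C) ℝ) :
    (1 / 2) * ∑ i, ∑ j, w i j *
        ∑ k, (σ (X i k) / Real.sqrt (1 + d i)
              - σ (X j k) / Real.sqrt (1 + d j)) ^ 2 ≤
    (1 / 2) * ∑ i, ∑ j, w i j *
        ∑ k, (X i k / Real.sqrt (1 + d i) - X j k / Real.sqrt (1 + d j)) ^ 2 := by
  have hdpos : ∀ i, 0 < Real.sqrt (1 + d i) := by
    intro i
    apply Real.sqrt_pos.mpr
    have : 0 ≤ d i := by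
      rw [hd i]; exact Finset.sum_nonneg fun j _ => hnonneg i j
    linarith
  have key : ∀ i (x : ℝ), σ x / Real.sqrt (1 + d i)
      = σ (x / Real.sqrt (1 + d i)) := by
    intro i x
    have h := hhom (Real.sqrt (1 + d i))⁻¹ x (inv_pos.mpr (hdpos i))
    rw [div_eq_inv_mul, div_eq_inv_mul, h]
  apply mul_le_mul_of_nonneg_left _ (by norm_num : (0:ℝ) ≤ 1/2)
  apply Finset.sum_le_sum; intro i _
  apply Finset.sum_le_sum; intro j _
  apply mul_le_mul_of_nonneg_left _ (hnonneg i j)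
  apply Finset.sum_le_sum; intro k _
  rw [key i, key j]
  have h := hlip (X i k / Real.sqrt (1 + d i)) (X j k / Real.sqrt (1 + d j))
  calc (σ (X i k / Real.sqrt (1 + d i)) - σ (X j k / Real.sqrt (1 + d j))) ^ 2
      = |σ (X i k / Real.sqrt (1 + d i)) - σ (X j k / Real.sqrt (1 + d j))| ^ 2 := by
        rw [sq_abs]
    _ ≤ |X i k / Real.sqrt (1 + d i) - X j k / Real.sqrt (1 + d j)| ^ 2 := by
        exact pow_le_pow_left₀ (abs_nonneg _) h 2
    _ = _ := by rw [sq_abs]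
end

section
/- Let G be a d-regular finite graph on N vertices with symmetric nonnegative edge weights w_{ij} and all degrees equal to d (d_i = d for all i), with Dirichlet energy E(X) = (1/2) Σ_{i,j} w_{ij} ‖ x_i/√(1+d) − x_j/√(1+d) ‖₂² for X ∈ ℝ^{N×C} with rows x_i. Then for any 1-Lipschitz function σ : ℝ → ℝ applied entrywise (e.g., ReLU, Leaky-ReLU, Tanh, or Sigmoid), E(σ(X)) ≤ E(X). -/
/-- For a `d`-regular weighted graph, any 1-Lipschitz activation `σ` applied
entrywise does not increase the Dirichlet energy
`E(X) = (1/2) ∑_{i,j} w_{ij} ‖x_i/√(1+d) - x_j/√(1+d)‖₂²`. -/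
theorem dirichletEnergy_activation_le_regular
    (σ : ℝ → ℝ)
    (hlip : ∀ x y : ℝ, |σ x - σ y| ≤ |x - y|)
    (N C : ℕ) (w : Matrix (Fin N) (Fin N) ℝ)
    (hsymm : ∀ i j, w i j = w j i)
    (hnonneg : ∀ i j, 0 ≤ w i j)
    (d : ℝ) (hreg : ∀ i, ∑ j, w i j = d)
    (X : Matrix (Fin N) (Fin C) ℝ) :
    (1 / 2) * ∑ i, ∑ j, w i j *
        ∑ k, (σ (X i k) / Real.sqrt (1 + d)
              - σ (X j k) / Real.sqrt (1 + d)) ^ 2 ≤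
    (1 / 2) * ∑ i, ∑ j, w i j *
        ∑ k, (X i k / Real.sqrt (1 + d) - X j k / Real.sqrt (1 + d)) ^ 2 := by
  have key : ∀ a b : ℝ, (σ a / Real.sqrt (1 + d) - σ b / Real.sqrt (1 + d)) ^ 2 ≤
      (a / Real.sqrt (1 + d) - b / Real.sqrt (1 + d)) ^ 2 := by
    intro a b
    rw [div_sub_div_same, div_sub_div_same, div_pow, div_pow]
    apply div_le_div_of_nonneg_right ?_ (by positivity)
    have := pow_le_pow_left₀ (abs_nonneg _) (hlip a b) 2
    rwa [sq_abs, sq_abs] at this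
  apply mul_le_mul_of_nonneg_left ?_ (by norm_num)
  apply Finset.sum_le_sum; intro i _
  apply Finset.sum_le_sum; intro j _
  apply mul_le_mul_of_nonneg_left ?_ (hnonneg i j)
  exact Finset.sum_le_sum fun k _ => key (X i k) (X j k)
end
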